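/- Let Y be a set and S : Y → Y a bijection such that for each n ≥ 1 the set of y ∈ Y with S^n(y) = y is finite, and let T be the doubled map on X = Y × ℤ/2ℤ given by T(y,e) = (S(y), e+1). Then in the ring of formal power series over ℚ one has ζ_T(z) = ζ_S(z)·ζ_S(−z), where ζ_S(−z) denotes the power series obtained from ζ_S by substituting −z for z. -/

import Mathlib

open Function

/-- `F_T(n)`: the number of points of period `n`, i.e. of `x` with `T^[n] x = x`. -/
noncomputable def numPer {X : Type*} (T : X → X) (n : ℕ) : ℕ :=
  Nat.card {x : X // T^[n] x = x}

/-- `τ` is a closed orbit of length `n` under `T`: a set of the form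
`{x, T x, …, T^[n-1] x}` of cardinality exactly `n` with `T^[n] x = x`. -/
def IsClosedOrbit {X : Type*} (T : X → X) (n : ℕ) (τ : Set X) : Prop :=
  ∃ x : X, T^[n] x = x ∧ τ = {y | ∃ k < n, T^[k] x = y} ∧ τ.ncard = n

/-- `O_T(n)`: the number of closed orbits of length `n` under `T`. -/
noncomputable def numOrb {X : Type*} (T : X → X) (n : ℕ) : ℕ :=
  Nat.card {τ : Set X // IsClosedOrbit T n τ}

/-- The formal exponential `exp f = ∑_k f^k / k!` of a power series `f` over `ℚ`
(defined coefficientwise; for `f` with zero constant term only the terms with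
`k ≤ n` contribute to the `n`-th coefficient). -/
noncomputable def expPS (f : PowerSeries ℚ) : PowerSeries ℚ :=
  PowerSeries.mk fun n =>
    ∑ k ∈ Finset.range (n + 1), PowerSeries.coeff (R := ℚ) n (f ^ k) / (Nat.factorial k : ℚ)

/-- The dynamical zeta function `ζ_T(z) = exp (∑_{n ≥ 1} F_T(n) zⁿ / n)`. -/
noncomputable def dynZeta {X : Type*} (T : X → X) : PowerSeries ℚ :=
  expPS (PowerSeries.mk fun n => if n = 0 then 0 else (numPer T n : ℚ) / n)

/-- A formal power series over `ℚ` is rational if `q * f = p` for polynomials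
`p`, `q` with `q` having nonzero constant term. -/
def IsRationalPS (f : PowerSeries ℚ) : Prop :=
  ∃ p q : Polynomial ℚ, q.coeff 0 ≠ 0 ∧ (q : PowerSeries ℚ) * f = (p : PowerSeries ℚ)

open PowerSeries Finset in
lemma coeff_pow_mul_pow_eq_zero' {f g : PowerSeries ℚ} (hf : constantCoeff f = 0)
    (hg : constantCoeff g = 0) {n a b : ℕ} (h : n < a + b) :
    coeff n (f ^ a * g ^ b) = 0 := by
  have hd : (X : ℚ⟦X⟧) ^ (a + b) ∣ f ^ a * g ^ b := by
    rw [pow_add]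
    exact mul_dvd_mul (pow_dvd_pow_of_dvd (X_dvd_iff.2 hf) a)
      (pow_dvd_pow_of_dvd (X_dvd_iff.2 hg) b)
  exact X_pow_dvd_iff.1 hd n h

open PowerSeries in
lemma coeff_pow_eq_zero' {f : PowerSeries ℚ} (hf : constantCoeff f = 0)
    {m a : ℕ} (h : m < a) : coeff m (f ^ a) = 0 := by
  have := coeff_pow_mul_pow_eq_zero' hf hf (n := m) (a := a) (b := 0) (by omega)
  simpa using this

open PowerSeries Finset in
lemma expPS_mul {f g : PowerSeries ℚ} (hf : constantCoeff f = 0)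
    (hg : constantCoeff g = 0) :
    expPS (f + g) = expPS f * expPS g := by
  ext n
  set h : ℕ → ℕ → ℚ := fun a b =>
    coeff n (f ^ a * g ^ b) / ((a.factorial : ℚ) * (b.factorial : ℚ)) with hh
  have hzero : ∀ a b : ℕ, n < a + b → h a b = 0 := fun a b hab => by
    simp [hh, coeff_pow_mul_pow_eq_zero' hf hg hab]
  have hL : coeff n (expPS (f + g))
      = ∑ a ∈ range (n+1), ∑ b ∈ range (n+1), h a b := by
    rw [expPS, coeff_mk]
    have step1 : ∀ k ∈ range (n+1),
        coeff n ((f + g) ^ k) / (k.factorial : ℚ)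
          = ∑ p ∈ Finset.HasAntidiagonal.antidiagonal k, h p.1 p.2 := by
      intro k _
      rw [Finset.Nat.sum_antidiagonal_eq_sum_range_succ_mk]
      rw [add_pow, map_sum, Finset.sum_div]
      refine Finset.sum_congr rfl fun m hm => ?_
      rw [Finset.mem_range, Nat.lt_succ_iff] at hm
      have : ((k.choose m : ℚ⟦X⟧)) = C ((k.choose m : ℚ)) := by
        simp
      rw [this, coeff_mul_C, hh]
      have hfac : (k.choose m : ℚ) * (m.factorial : ℚ) * ((k-m).factorial : ℚ)
          = (k.factorial : ℚ) := by
        exact_mod_cast congrArg (Nat.cast : ℕ → ℚ)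
          (Nat.choose_mul_factorial_mul_factorial hm)
      have h1 : (k.factorial : ℚ) ≠ 0 := Nat.cast_ne_zero.2 (Nat.factorial_ne_zero k)
      have h2 : (m.factorial : ℚ) ≠ 0 := Nat.cast_ne_zero.2 (Nat.factorial_ne_zero m)
      have h3 : ((k-m).factorial : ℚ) ≠ 0 := Nat.cast_ne_zero.2 (Nat.factorial_ne_zero _)
      field_simp
      rw [← hfac]; ring
    rw [Finset.sum_congr rfl step1]
    have hdisj : (↑(range (n+1)) : Set ℕ).PairwiseDisjoint Finset.HasAntidiagonal.antidiagonal := by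
      intro i _ j _ hij
      simp only [Finset.disjoint_left]
      intro p hp hp'
      rw [Finset.HasAntidiagonal.mem_antidiagonal] at hp hp'
      exact hij (hp ▸ hp')
    rw [← Finset.sum_biUnion hdisj]
    rw [← Finset.sum_product']
    refine Finset.sum_subset ?_ ?_
    · intro p hp
      rw [Finset.mem_biUnion] at hp
      obtain ⟨k, hk, hpk⟩ := hp
      rw [Finset.mem_range, Nat.lt_succ_iff] at hk
      rw [Finset.HasAntidiagonal.mem_antidiagonal] at hpk
      rw [Finset.mem_product, Finset.mem_range, Finset.mem_range]
      omega
    · intro p hp hnp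
      refine hzero p.1 p.2 ?_
      by_contra hc
      push_neg at hc
      exact hnp (Finset.mem_biUnion.2 ⟨p.1 + p.2,
        Finset.mem_range.2 (Nat.lt_succ_of_le hc),
        Finset.HasAntidiagonal.mem_antidiagonal.2 rfl⟩)
  have hR : coeff n (expPS f * expPS g)
      = ∑ a ∈ range (n+1), ∑ b ∈ range (n+1), h a b := by
    rw [coeff_mul]
    have step1 : ∀ p ∈ Finset.HasAntidiagonal.antidiagonal n,
        coeff p.1 (expPS f) * coeff p.2 (expPS g)
          = ∑ a ∈ range (n+1), ∑ b ∈ range (n+1),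
              (coeff p.1 (f ^ a) * coeff p.2 (g ^ b))
                / ((a.factorial : ℚ) * (b.factorial : ℚ)) := by
      intro p hp
      rw [Finset.HasAntidiagonal.mem_antidiagonal] at hp
      have hp1 : p.1 ≤ n := by omega
      have hp2 : p.2 ≤ n := by omega
      have e1 : coeff p.1 (expPS f)
          = ∑ a ∈ range (n+1), coeff p.1 (f ^ a) / (a.factorial : ℚ) := by
        rw [expPS, coeff_mk]
        refine Finset.sum_subset (Finset.range_subset_range.2 (by omega)) ?_
        intro a _ ha
        rw [Finset.mem_range, Nat.lt_succ_iff] at ha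
        push_neg at ha
        rw [coeff_pow_eq_zero' hf ha, zero_div]
      have e2 : coeff p.2 (expPS g)
          = ∑ b ∈ range (n+1), coeff p.2 (g ^ b) / (b.factorial : ℚ) := by
        rw [expPS, coeff_mk]
        refine Finset.sum_subset (Finset.range_subset_range.2 (by omega)) ?_
        intro b _ hb
        rw [Finset.mem_range, Nat.lt_succ_iff] at hb
        push_neg at hb
        rw [coeff_pow_eq_zero' hg hb, zero_div]
      rw [e1, e2, Finset.sum_mul_sum]
      refine Finset.sum_congr rfl fun a _ => Finset.sum_congr rfl fun b _ => ?_
      field_simp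
    rw [Finset.sum_congr rfl step1, Finset.sum_comm]
    refine Finset.sum_congr rfl fun a _ => ?_
    rw [Finset.sum_comm]
    refine Finset.sum_congr rfl fun b _ => ?_
    rw [← Finset.sum_div, ← coeff_mul]
  rw [hL, hR]

open PowerSeries in
lemma rescale_expPS (a : ℚ) (f : PowerSeries ℚ) :
    PowerSeries.rescale a (expPS f) = expPS (PowerSeries.rescale a f) := by
  ext n
  rw [coeff_rescale, expPS, expPS, coeff_mk, coeff_mk, Finset.mul_sum]
  refine Finset.sum_congr rfl fun k _ => ?_
  rw [← map_pow, coeff_rescale]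
  ring

lemma iterate_double {Y : Type*} (S : Y → Y) (n : ℕ) (p : Y × ZMod 2) :
    (fun p : Y × ZMod 2 => (S p.1, p.2 + 1))^[n] p = (S^[n] p.1, p.2 + n) := by
  induction n with
  | zero => simp
  | succ n ih =>
      rw [Function.iterate_succ_apply', ih, Function.iterate_succ_apply']
      simp only [Prod.mk.injEq, true_and]
      push_cast; ring

lemma numPer_double {Y : Type*} (S : Y → Y) (n : ℕ) (hn : 1 ≤ n) :
    numPer (fun p : Y × ZMod 2 => (S p.1, p.2 + 1)) n
      = if Even n then 2 * numPer S n else 0 := by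
  set T := fun p : Y × ZMod 2 => (S p.1, p.2 + 1) with hT
  have hcond : ∀ p : Y × ZMod 2, T^[n] p = p ↔ (S^[n] p.1 = p.1 ∧ (n : ZMod 2) = 0) := by
    intro p
    rw [iterate_double, Prod.ext_iff]
    simp [add_eq_left]
  by_cases hpar : Even n
  · have h2 : (n : ZMod 2) = 0 := by
      rw [ZMod.natCast_eq_zero_iff]
      exact hpar.two_dvd
    have e : {p : Y × ZMod 2 // T^[n] p = p} ≃ {y : Y // S^[n] y = y} × ZMod 2 :=
      { toFun := fun q => (⟨q.1.1, ((hcond q.1).1 q.2).1⟩, q.1.2)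
        invFun := fun q => ⟨(q.1.1, q.2), (hcond _).2 ⟨q.1.2, h2⟩⟩
        left_inv := fun q => rfl
        right_inv := fun q => rfl }
    rw [if_pos hpar, numPer, numPer, Nat.card_congr e, Nat.card_prod]
    have : Nat.card (ZMod 2) = 2 := by simp
    rw [this]; ring
  · have h2 : (n : ZMod 2) ≠ 0 := by
      intro h0
      rw [ZMod.natCast_eq_zero_iff] at h0
      exact hpar (even_iff_two_dvd.2 h0)
    rw [if_neg hpar, numPer]
    have : IsEmpty {p : Y × ZMod 2 // T^[n] p = p} := by
      refine ⟨fun q => h2 ((hcond q.1).1 q.2).2⟩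
    simp [Nat.card_of_isEmpty]

theorem statement15 {Y : Type*} (S : Y → Y) (hS : Function.Bijective S)
    (hfin : ∀ n : ℕ, 1 ≤ n → {y : Y | S^[n] y = y}.Finite) :
    dynZeta (fun p : Y × ZMod 2 => (S p.1, p.2 + 1)) =
      dynZeta S * PowerSeries.rescale (-1) (dynZeta S) := by
  classical
  set f0 : PowerSeries ℚ :=
    PowerSeries.mk fun n => if n = 0 then 0 else (numPer S n : ℚ) / n with hf0
  have hc0 : PowerSeries.constantCoeff f0 = 0 := by
    rw [hf0, ← PowerSeries.coeff_zero_eq_constantCoeff_apply, PowerSeries.coeff_mk]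
    simp
  have hc0' : PowerSeries.constantCoeff (PowerSeries.rescale (-1) f0) = 0 := by
    rw [← PowerSeries.coeff_zero_eq_constantCoeff_apply, PowerSeries.coeff_rescale]
    simpa using hc0
  have hser : (PowerSeries.mk fun n => if n = 0 then 0 else
      (numPer (fun p : Y × ZMod 2 => (S p.1, p.2 + 1)) n : ℚ) / n)
        = f0 + PowerSeries.rescale (-1) f0 := by
    ext n
    simp only [hf0, PowerSeries.coeff_mk, map_add, PowerSeries.coeff_rescale]
    rcases Nat.eq_zero_or_pos n with hn | hn
    · simp [hn]
    · rw [if_neg (by omega), if_neg (by omega), numPer_double S n hn]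
      by_cases hpar : Even n
      · rw [if_pos hpar, hpar.neg_one_pow]
        push_cast
        ring
      · rw [if_neg hpar, (Nat.not_even_iff_odd.1 hpar).neg_one_pow]
        push_cast
        ring
  rw [dynZeta, hser, expPS_mul hc0 hc0', dynZeta, ← hf0, rescale_expPS]
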